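/- Product formula for the squared overlap determinant: let N ≤ M and let J_1 = {l_1 < l_2 < … < l_N} and J_2 = {m_1 < m_2 < … < m_N} be subsets of {1,…,M} of cardinality N; let (l_k)_{k=N+1}^M enumerate {1,…,M} \ J_1 and (m_k)_{k=N+1}^M enumerate {1,…,M} \ J_2. Then |det((⟨φ_{l_j}, ψ_{m_k}⟩)_{1≤j,k≤N})|² = ∏_{j=1}^N ∏_{k=N+1}^M (|b_{m_k} − a_{l_j}| · |a_{l_k} − b_{m_j}|) / (|a_{l_k} − a_{l_j}| · |b_{m_k} − b_{m_j}|). -/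

import Mathlib

open Matrix Finset Polynomial

lemma prod_erase_split {β : Type*} [CommMonoid β] {ι : Type*} [DecidableEq ι] [LinearOrder ι]
    [Fintype ι] (s : Finset ι) (f : ι → ι → β) :
    ∏ j ∈ s, ∏ k ∈ s.erase j, f j k
      = (∏ j ∈ s, ∏ k ∈ s.filter (fun k => j < k), f j k) *
        (∏ j ∈ s, ∏ k ∈ s.filter (fun k => j < k), f k j) := by
  have h1 : ∀ j ∈ s, ∏ k ∈ s.erase j, f j k
      = (∏ k ∈ s.filter (fun k => j < k), f j k) * ∏ k ∈ s.filter (fun k => k < j), f j k := by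
    intro j _
    rw [← Finset.prod_union]
    · apply Finset.prod_congr _ (fun _ _ => rfl)
      ext k
      simp only [Finset.mem_erase, Finset.mem_union, Finset.mem_filter]
      constructor
      · rintro ⟨hne, hk⟩
        rcases lt_or_gt_of_ne (Ne.symm hne) with h | h
        · exact Or.inl ⟨hk, h⟩
        · exact Or.inr ⟨hk, h⟩
      · rintro (⟨hk, h⟩ | ⟨hk, h⟩)
        · exact ⟨ne_of_gt h, hk⟩
        · exact ⟨ne_of_lt h, hk⟩
    · rw [Finset.disjoint_left]
      rintro k hk hk'
      simp only [Finset.mem_filter] at hk hk'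
      exact absurd (hk.2.trans hk'.2) (lt_irrefl _)
  calc ∏ j ∈ s, ∏ k ∈ s.erase j, f j k
      = ∏ j ∈ s, ((∏ k ∈ s.filter (fun k => j < k), f j k) *
          ∏ k ∈ s.filter (fun k => k < j), f j k) := Finset.prod_congr rfl h1
    _ = (∏ j ∈ s, ∏ k ∈ s.filter (fun k => j < k), f j k) *
        ∏ j ∈ s, ∏ k ∈ s.filter (fun k => k < j), f j k := Finset.prod_mul_distrib
    _ = (∏ j ∈ s, ∏ k ∈ s.filter (fun k => j < k), f j k) *
        ∏ j ∈ s, ∏ k ∈ s.filter (fun k => j < k), f k j := by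
        congr 1
        exact Finset.prod_comm' (fun x y => by simp only [Finset.mem_filter]; tauto)


lemma filter_lt_eq_Ioi {n : ℕ} (j : Fin n) :
    Finset.univ.filter (fun k => j < k) = Finset.Ioi j := by
  ext k; simp [Finset.mem_Ioi]

lemma cauchy_det {F : Type*} [Field F] {n : ℕ} (x y : Fin n → F)
    (hxy : ∀ i j, x i - y j ≠ 0) (hy : Function.Injective y) :
    Matrix.det (Matrix.of fun i j : Fin n => (x i - y j)⁻¹) =
      (∏ i : Fin n, ∏ j ∈ Finset.Ioi i, ((x j - x i) * (y i - y j))) /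
        ∏ i : Fin n, ∏ j : Fin n, (x i - y j) := by
  classical
  set P : Fin n → F[X] := fun j => ∏ k ∈ Finset.univ.erase j, (X - C (y k)) with hP
  have hdeg : ∀ j, (P j).natDegree < n := by
    intro j
    have : (P j).natDegree = ∑ k ∈ Finset.univ.erase j, ((X : F[X]) - C (y k)).natDegree :=
      natDegree_prod_of_monic _ _ (fun k _ => monic_X_sub_C _)
    simp only [natDegree_X_sub_C, Finset.sum_const, smul_eq_mul, mul_one] at this
    rw [this, Finset.card_erase_of_mem (Finset.mem_univ j), Finset.card_univ, Fintype.card_fin]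
    exact Nat.sub_lt (Nat.pos_of_ne_zero (fun h => (h ▸ j).elim0)) one_pos
  have hPeval : ∀ j (t : F), (P j).eval t = ∏ k ∈ Finset.univ.erase j, (t - y k) := by
    intro j t; simp [hP, eval_prod]
  set Q : Matrix (Fin n) (Fin n) F := Matrix.of fun r j => (P j).coeff (r : ℕ) with hQ
  have hVQ : ∀ (z : Fin n → F) i j, (vandermonde z * Q) i j = (P j).eval (z i) := by
    intro z i j
    rw [Matrix.mul_apply, eval_eq_sum_range' (hdeg j)]
    rw [← Fin.sum_univ_eq_sum_range (fun r => (P j).coeff r * z i ^ r)]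
    exact Finset.sum_congr rfl (fun r _ => by
      simp [vandermonde_apply, hQ, mul_comm])
  have hVyQ : vandermonde y * Q =
      Matrix.diagonal (fun j => ∏ k ∈ Finset.univ.erase j, (y j - y k)) := by
    ext i j
    rw [hVQ, hPeval]
    rcases eq_or_ne i j with rfl | hne
    · simp [Matrix.diagonal_apply_eq]
    · rw [Matrix.diagonal_apply_ne _ hne]
      exact Finset.prod_eq_zero (Finset.mem_erase.2 ⟨hne, Finset.mem_univ i⟩)
        (by simp)
  have hprodne : ∀ i, (∏ k, (x i - y k)) ≠ 0 := fun i =>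
    Finset.prod_ne_zero_iff.2 (fun k _ => hxy i k)
  have hC : (Matrix.of fun i j : Fin n => (x i - y j)⁻¹) =
      Matrix.diagonal (fun i => (∏ k, (x i - y k))⁻¹) * (vandermonde x * Q) := by
    ext i j
    rw [Matrix.diagonal_mul, hVQ, hPeval]
    have hsplit : ∏ k, (x i - y k) = (x i - y j) * ∏ k ∈ Finset.univ.erase j, (x i - y k) :=
      (Finset.mul_prod_erase _ _ (Finset.mem_univ j)).symm
    have hne2 : (∏ k ∈ Finset.univ.erase j, (x i - y k)) ≠ 0 :=
      Finset.prod_ne_zero_iff.2 (fun k _ => hxy i k)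
    rw [Matrix.of_apply, hsplit, mul_inv, mul_assoc, inv_mul_cancel₀ hne2, mul_one]
  have hdetVy : (vandermonde y).det ≠ 0 := (det_vandermonde_ne_zero_iff).2 hy
  have e1 : (vandermonde y).det * Q.det
      = ∏ j, ∏ k ∈ Finset.univ.erase j, (y j - y k) := by
    rw [← Matrix.det_mul, hVyQ, Matrix.det_diagonal]
  have e2 : (Matrix.of fun i j : Fin n => (x i - y j)⁻¹).det
      = (∏ i, (∏ k, (x i - y k))⁻¹) * ((vandermonde x).det * Q.det) := by
    rw [hC, Matrix.det_mul, Matrix.det_diagonal, Matrix.det_mul]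
  have hsplity : ∏ j, ∏ k ∈ Finset.univ.erase j, (y j - y k)
      = (∏ j, ∏ k ∈ Finset.Ioi j, (y k - y j)) * ∏ j, ∏ k ∈ Finset.Ioi j, (y j - y k) := by
    rw [prod_erase_split Finset.univ (fun j k => y j - y k)]
    simp_rw [filter_lt_eq_Ioi]
    rw [mul_comm]
  have hQdet : Q.det = ∏ j, ∏ k ∈ Finset.Ioi j, (y j - y k) := by
    apply mul_left_cancel₀ hdetVy
    rw [e1, hsplity, det_vandermonde]
  rw [e2, hQdet, det_vandermonde]
  have h1 : ∏ i, ∏ j ∈ Finset.Ioi i, ((x j - x i) * (y i - y j))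
      = (∏ i, ∏ j ∈ Finset.Ioi i, (x j - x i)) * ∏ i, ∏ j ∈ Finset.Ioi i, (y i - y j) := by
    rw [← Finset.prod_mul_distrib]
    exact Finset.prod_congr rfl fun i _ => Finset.prod_mul_distrib
  have h2 : ∏ i, (∏ k, (x i - y k))⁻¹ = (∏ i, ∏ k, (x i - y k))⁻¹ := by
    rw [← Finset.prod_inv_distrib]
  rw [h1, h2, div_eq_mul_inv]
  ring

lemma vecMulVec_mulVec' {n : ℕ} (v w x : Fin n → ℂ) :
    Matrix.vecMulVec v w *ᵥ x = (w ⬝ᵥ x) • v := by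
  ext i
  simp [Matrix.vecMulVec_apply, Matrix.mulVec, dotProduct, Finset.mul_sum, mul_comm,
    mul_left_comm]

/-- Completeness relation for an orthonormal family of `n` vectors in `ℂ^n`. -/
lemma orth_complete {n : ℕ} (φ : Fin n → Fin n → ℂ)
    (h : ∀ j k, star (φ j) ⬝ᵥ φ k = if j = k then (1 : ℂ) else 0) (x : Fin n → ℂ) (i : Fin n) :
    x i = ∑ j, (star (φ j) ⬝ᵥ x) * φ j i := by
  classical
  set V : Matrix (Fin n) (Fin n) ℂ := Matrix.of fun i j => φ j i with hVdef
  have h1 : Vᴴ * V = 1 := by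
    ext j k
    have := h j k
    simpa [Matrix.mul_apply, Matrix.conjTranspose_apply, dotProduct, Matrix.one_apply,
      hVdef] using this
  have h2 : V * Vᴴ = 1 := mul_eq_one_comm.mp h1
  have h3 : ∀ i i' : Fin n, ∑ j, φ j i * (starRingEnd ℂ) (φ j i')
      = if i = i' then (1:ℂ) else 0 := by
    intro i i'
    have := congrFun (congrFun h2 i) i'
    simpa [Matrix.mul_apply, Matrix.conjTranspose_apply, Matrix.one_apply, hVdef] using this
  calc x i = ∑ i', (if i = i' then (1:ℂ) else 0) * x i' := by simp
    _ = ∑ i', (∑ j, φ j i * (starRingEnd ℂ) (φ j i')) * x i' :=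
        Finset.sum_congr rfl fun i' _ => by rw [h3]
    _ = ∑ j, (star (φ j) ⬝ᵥ x) * φ j i := by
        simp only [dotProduct, Finset.sum_mul, Finset.mul_sum, Pi.star_apply]
        rw [Finset.sum_comm]
        refine Finset.sum_congr rfl fun j _ => Finset.sum_congr rfl fun i' _ => by
          simp only [Complex.star_def]; ring

/-- If `v` is cyclic for Hermitian `H`, any nonzero eigenvector has nonzero overlap with `v`. -/
lemma cyclic_overlap_ne_zero {n : ℕ} {H : Matrix (Fin n) (Fin n) ℂ} (hH : H.IsHermitian)
    {v : Fin n → ℂ}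
    (hcyc : Submodule.span ℂ (Set.range fun k : ℕ => (H ^ k) *ᵥ v) = ⊤)
    {w : Fin n → ℂ} {μ : ℝ} (hw : H *ᵥ w = (μ : ℂ) • w) (hw0 : w ≠ 0) :
    star w ⬝ᵥ v ≠ 0 := by
  intro h0
  have hrow : Matrix.vecMul (star w) H = (μ : ℂ) • star w := by
    have h := Matrix.star_mulVec (M := H) (v := w)
    rw [hw, hH.eq] at h
    rw [← h]
    ext i
    simp [Complex.star_def]
  have key : ∀ N : ℕ, star w ⬝ᵥ ((H ^ N) *ᵥ v) = 0 := by
    intro N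
    induction N with
    | zero => simpa using h0
    | succ N ih =>
      rw [pow_succ', ← Matrix.mulVec_mulVec, Matrix.dotProduct_mulVec, hrow,
        smul_dotProduct, ih, smul_zero]
  have hall : ∀ x, x ∈ Submodule.span ℂ (Set.range fun k : ℕ => (H ^ k) *ᵥ v) →
      star w ⬝ᵥ x = 0 := by
    intro x hx
    induction hx using Submodule.span_induction with
    | mem x hxmem => obtain ⟨k, rfl⟩ := hxmem; exact key k
    | zero => simp
    | add x y _ _ hx hy => rw [dotProduct_add, hx, hy, add_zero]
    | smul a x _ hx => rw [dotProduct_smul, hx, smul_zero]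
  have h := hall w (by rw [hcyc]; exact Submodule.mem_top)
  apply hw0
  have h2 : ∑ i, Complex.normSq (w i) = 0 := by
    have h3 : ((∑ i, Complex.normSq (w i) : ℝ) : ℂ) = 0 := by
      push_cast
      rw [← h, dotProduct]
      exact Finset.sum_congr rfl fun i _ => by
        simp [Complex.normSq_eq_conj_mul_self, Complex.star_def]
    exact_mod_cast h3
  funext i
  have h4 := (Finset.sum_eq_zero_iff_of_nonneg
    (fun i _ => Complex.normSq_nonneg (w i))).mp h2 i (Finset.mem_univ i)
  simpa using Complex.normSq_eq_zero.mp h4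

/-- Cyclicity gives simple spectrum. -/
lemma cyclic_eig_inj {n : ℕ} {H : Matrix (Fin n) (Fin n) ℂ} (hH : H.IsHermitian)
    {v : Fin n → ℂ}
    (hcyc : Submodule.span ℂ (Set.range fun k : ℕ => (H ^ k) *ᵥ v) = ⊤)
    (χ : Fin n → Fin n → ℂ) (μ : Fin n → ℝ)
    (horth : ∀ j k, star (χ j) ⬝ᵥ χ k = if j = k then (1 : ℂ) else 0)
    (heig : ∀ j, H *ᵥ χ j = (μ j : ℂ) • χ j) : Function.Injective μ := by
  intro i j hij
  by_contra hne
  have hchine : ∀ k, χ k ≠ 0 := by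
    intro k hk
    have := horth k k
    rw [hk] at this
    simp at this
  have hcne : ∀ k, star (χ k) ⬝ᵥ v ≠ 0 := fun k =>
    cyclic_overlap_ne_zero hH hcyc (heig k) (hchine k)
  set ci : ℂ := star (χ i) ⬝ᵥ v with hci
  set cj : ℂ := star (χ j) ⬝ᵥ v with hcj
  set w : Fin n → ℂ := (starRingEnd ℂ) cj • χ i - (starRingEnd ℂ) ci • χ j with hwdef
  have hweig : H *ᵥ w = (μ i : ℂ) • w := by
    rw [hwdef, Matrix.mulVec_sub, Matrix.mulVec_smul, Matrix.mulVec_smul, heig i, heig j,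
      ← hij]
    module
  have hwne : w ≠ 0 := by
    intro hw0
    have hdot : star (χ i) ⬝ᵥ w = (starRingEnd ℂ) cj := by
      rw [hwdef, dotProduct_sub, dotProduct_smul, dotProduct_smul,
        horth, horth, if_pos rfl, if_neg hne]
      simp
    rw [hw0, dotProduct_zero] at hdot
    exact hcne j (by simpa using hdot.symm)
  have hover := cyclic_overlap_ne_zero hH hcyc hweig hwne
  apply hover
  rw [hwdef, star_sub, star_smul, star_smul, sub_dotProduct,
    smul_dotProduct, smul_dotProduct, ← hci, ← hcj]
  simp only [smul_eq_mul, RCLike.star_def, Complex.conj_conj]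
  ring

lemma vecMulVec_star_isHermitian {n : ℕ} (v : Fin n → ℂ) :
    (Matrix.vecMulVec v (star v)).IsHermitian := by
  ext i j
  simp [Matrix.conjTranspose_apply, Matrix.vecMulVec_apply, mul_comm]

lemma span_nat_of_span_fin {n : ℕ} (H : Matrix (Fin n) (Fin n) ℂ) (v : Fin n → ℂ)
    (hcyc : Submodule.span ℂ (Set.range fun k : Fin n => (H ^ (k : ℕ)) *ᵥ v) = ⊤) :
    Submodule.span ℂ (Set.range fun k : ℕ => (H ^ k) *ᵥ v) = ⊤ := by
  rw [eq_top_iff, ← hcyc]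
  apply Submodule.span_mono
  rintro _ ⟨k, rfl⟩
  exact ⟨(k : ℕ), rfl⟩

lemma span_rank_one {n : ℕ} (A : Matrix (Fin n) (Fin n) ℂ) (v : Fin n → ℂ)
    (hcyc : Submodule.span ℂ (Set.range fun k : ℕ => (A ^ k) *ᵥ v) = ⊤) :
    Submodule.span ℂ
      (Set.range fun k : ℕ => ((A + Matrix.vecMulVec v (star v)) ^ k) *ᵥ v) = ⊤ := by
  set B := A + Matrix.vecMulVec v (star v) with hBdef
  set S := Submodule.span ℂ (Set.range fun k : ℕ => (B ^ k) *ᵥ v) with hS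
  have hvS : v ∈ S := Submodule.subset_span ⟨0, by simp⟩
  have hBS : ∀ x ∈ S, B *ᵥ x ∈ S := by
    intro x hx
    induction hx using Submodule.span_induction with
    | mem x hxm =>
      obtain ⟨k, rfl⟩ := hxm
      exact Submodule.subset_span ⟨k + 1, by simp only []; rw [pow_succ', ← Matrix.mulVec_mulVec]⟩
    | zero => rw [Matrix.mulVec_zero]; exact Submodule.zero_mem _
    | add x y _ _ hx hy => rw [Matrix.mulVec_add]; exact Submodule.add_mem _ hx hy
    | smul a x _ hx => rw [Matrix.mulVec_smul]; exact Submodule.smul_mem _ _ hx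
  have hAS : ∀ x ∈ S, A *ᵥ x ∈ S := by
    intro x hx
    have hsplit : A *ᵥ x = B *ᵥ x - (star v ⬝ᵥ x) • v := by
      rw [hBdef, Matrix.add_mulVec, vecMulVec_mulVec']
      abel
    rw [hsplit]
    exact Submodule.sub_mem _ (hBS x hx) (Submodule.smul_mem _ _ hvS)
  have hAN : ∀ N : ℕ, (A ^ N) *ᵥ v ∈ S := by
    intro N
    induction N with
    | zero => simpa using hvS
    | succ N ih => rw [pow_succ', ← Matrix.mulVec_mulVec]; exact hAS _ ih
  rw [eq_top_iff, ← hcyc]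
  exact Submodule.span_le.2 (by rintro _ ⟨k, rfl⟩; exact hAN k)

lemma residue_formula {n : ℕ} (a b : Fin n → ℝ) (γ : Fin n → ℝ) (ε : ℝ)
    (hb : Function.Injective b)
    (hab : ∀ i j, b i - a j ≠ 0)
    (hsum : ∀ i, ∑ j, γ j / (b i - a j) = ε) (i : Fin n) :
    γ i * ∏ k ∈ Finset.univ.erase i, (a i - a k) = -ε * ∏ k, (a i - b k) := by
  classical
  have hn : 0 < n := i.pos
  set p : ℝ[X] := ∏ j, (X - C (a j)) with hp
  set q : ℝ[X] := ∏ j, (X - C (b j)) with hq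
  set r : ℝ[X] := ∑ j, C (γ j) * ∏ k ∈ Finset.univ.erase j, (X - C (a k)) with hr
  set D : ℝ[X] := C ε * (q - p) + r with hD
  have hpmonic : p.Monic := monic_prod_of_monic _ _ (fun j _ => monic_X_sub_C _)
  have hqmonic : q.Monic := monic_prod_of_monic _ _ (fun j _ => monic_X_sub_C _)
  have hpdeg : p.natDegree = n := by
    rw [hp, natDegree_prod_of_monic _ _ (fun j _ => monic_X_sub_C _)]
    simp
  have hqdeg : q.natDegree = n := by
    rw [hq, natDegree_prod_of_monic _ _ (fun j _ => monic_X_sub_C _)]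
    simp
  have hpeval : ∀ t, p.eval t = ∏ k, (t - a k) := by intro t; simp [hp, eval_prod]
  have hqeval : ∀ t, q.eval t = ∏ k, (t - b k) := by intro t; simp [hq, eval_prod]
  have hreval : ∀ t, r.eval t = ∑ j, γ j * ∏ k ∈ Finset.univ.erase j, (t - a k) := by
    intro t
    rw [hr, eval_finset_sum]
    exact Finset.sum_congr rfl fun j _ => by simp [eval_prod]
  -- degree bounds
  have hqp : (q - p).natDegree < n := by
    rcases eq_or_ne (q - p) 0 with h | h
    · rw [h]; simpa using hn
    · rw [Polynomial.natDegree_lt_iff_degree_lt h]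
      have hdeg : (q - p).degree < q.degree :=
        Polynomial.degree_sub_lt
          (by rw [Polynomial.degree_eq_natDegree hqmonic.ne_zero,
                Polynomial.degree_eq_natDegree hpmonic.ne_zero, hpdeg, hqdeg])
          hqmonic.ne_zero
          (by rw [hqmonic.leadingCoeff, hpmonic.leadingCoeff])
      refine lt_of_lt_of_le hdeg ?_
      rw [Polynomial.degree_eq_natDegree hqmonic.ne_zero, hqdeg]
  have hrdeg : r.natDegree < n := by
    have h1 : r.natDegree ≤ n - 1 := by
      refine natDegree_sum_le_of_forall_le _ _ (fun j _ => ?_)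
      refine le_trans (natDegree_C_mul_le _ _) ?_
      rw [natDegree_prod_of_monic _ _ (fun k _ => monic_X_sub_C _)]
      simp [Finset.card_erase_of_mem]
    omega
  have hDdeg : D.natDegree < n := by
    apply lt_of_le_of_lt (natDegree_add_le _ _)
    apply max_lt _ hrdeg
    exact lt_of_le_of_lt (natDegree_C_mul_le _ _) hqp
  -- D vanishes at the n points b i
  have hDeval : ∀ i, D.eval (b i) = 0 := by
    intro i
    have hq0 : q.eval (b i) = 0 := by
      rw [hqeval]
      exact Finset.prod_eq_zero (Finset.mem_univ i) (by ring)
    have hr0 : r.eval (b i) = ε * p.eval (b i) := by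
      rw [hreval, hpeval, ← hsum i, Finset.sum_mul]
      refine Finset.sum_congr rfl fun j _ => ?_
      have hsplitp : ∏ k, (b i - a k)
          = (b i - a j) * ∏ k ∈ Finset.univ.erase j, (b i - a k) :=
        (Finset.mul_prod_erase _ _ (Finset.mem_univ j)).symm
      rw [hsplitp, div_mul_eq_mul_div, mul_comm (b i - a j), ← mul_assoc, mul_div_assoc,
        div_self (hab i j), mul_one]
    simp only [hD, eval_add, eval_mul, eval_C, eval_sub, hq0, hr0]
    ring
  have hD0 : D = 0 :=
    Polynomial.eq_zero_of_natDegree_lt_card_of_eval_eq_zero D hb hDeval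
      (by simpa using hDdeg)
  -- evaluate at a i
  have hai := congrArg (Polynomial.eval (a i)) hD0
  simp only [hD, eval_add, eval_mul, eval_C, eval_sub, eval_zero] at hai
  have hp0 : p.eval (a i) = 0 := by
    rw [hpeval]
    exact Finset.prod_eq_zero (Finset.mem_univ i) (by ring)
  have hrai : r.eval (a i) = γ i * ∏ k ∈ Finset.univ.erase i, (a i - a k) := by
    rw [hreval]
    rw [Finset.sum_eq_single i]
    · intro j _ hji
      apply mul_eq_zero_of_right
      exact Finset.prod_eq_zero (Finset.mem_erase.2 ⟨Ne.symm hji, Finset.mem_univ i⟩) (by ring)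
    · intro h; exact absurd (Finset.mem_univ i) h
  rw [hp0, hrai, hqeval] at hai
  linear_combination hai

section helpers

variable {β : Type*} [CommMonoid β]

lemma prod_castLE {N M : ℕ} (h : N ≤ M) (g : Fin M → β) :
    ∏ j : Fin N, g (Fin.castLE h j)
      = ∏ j ∈ Finset.univ.filter (fun j : Fin M => (j : ℕ) < N), g j := by
  refine Finset.prod_bij (fun j _ => Fin.castLE h j) ?_ ?_ ?_ ?_
  · intro j _
    simp only [Finset.mem_filter, Finset.mem_univ, true_and, Fin.coe_castLE]
    exact j.isLt
  · intro j _ k _ hjk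
    exact Fin.castLE_injective h hjk
  · intro j hj
    simp only [Finset.mem_filter, Finset.mem_univ, true_and] at hj
    exact ⟨⟨(j : ℕ), hj⟩, Finset.mem_univ _, by ext; simp⟩
  · intro j _; rfl

lemma prod_castLE_erase {N M : ℕ} (h : N ≤ M) (g : Fin M → β) (i : Fin N) :
    ∏ k ∈ Finset.univ.erase i, g (Fin.castLE h k)
      = ∏ k ∈ ((Finset.univ.filter (fun j : Fin M => (j : ℕ) < N)).erase (Fin.castLE h i)),
          g k := by
  refine Finset.prod_bij (fun j _ => Fin.castLE h j) ?_ ?_ ?_ ?_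
  · intro j hj
    simp only [Finset.mem_erase, Finset.mem_univ, and_true] at hj
    simp only [Finset.mem_erase, Finset.mem_filter, Finset.mem_univ, true_and, and_true,
      Fin.coe_castLE]
    exact ⟨fun hc => hj (Fin.castLE_injective h hc), j.isLt⟩
  · intro j _ k _ hjk
    exact Fin.castLE_injective h hjk
  · intro j hj
    simp only [Finset.mem_erase, Finset.mem_filter, Finset.mem_univ, true_and, and_true] at hj
    refine ⟨⟨(j : ℕ), hj.2⟩, ?_, by ext; simp⟩
    simp only [Finset.mem_erase, Finset.mem_univ, and_true]
    intro hc
    apply hj.1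
    rw [← congrArg (Fin.castLE h) hc]
    ext; simp
  · intro j _; rfl

lemma prod_erase_reindex {M : ℕ} (σ : Fin M → Fin M) (hσ : Function.Bijective σ)
    (g : Fin M → β) (j : Fin M) :
    ∏ k ∈ Finset.univ.erase (σ j), g k = ∏ k ∈ Finset.univ.erase j, g (σ k) := by
  refine (Finset.prod_bij (fun k _ => σ k) ?_ ?_ ?_ ?_).symm
  · intro k hk
    simp only [Finset.mem_erase, Finset.mem_univ, and_true] at hk ⊢
    exact fun hc => hk (hσ.1 hc)
  · intro k _ k' _ hkk'
    exact hσ.1 hkk'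
  · intro k hk
    simp only [Finset.mem_erase, Finset.mem_univ, and_true] at hk
    obtain ⟨k', rfl⟩ := hσ.2 k
    refine ⟨k', ?_, rfl⟩
    simp only [Finset.mem_erase, Finset.mem_univ, and_true]
    exact fun hc => hk (congrArg σ hc)
  · intro k _; rfl

lemma prod_split_univ {M N : ℕ} (g : Fin M → β) :
    ∏ k, g k = (∏ k ∈ Finset.univ.filter (fun k : Fin M => (k : ℕ) < N), g k) *
      ∏ k ∈ Finset.univ.filter (fun k : Fin M => N ≤ (k : ℕ)), g k := by
  have hset : Finset.univ.filter (fun k : Fin M => ¬ (k : ℕ) < N)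
      = Finset.univ.filter (fun k : Fin M => N ≤ (k : ℕ)) := by
    ext k; simp [not_lt]
  rw [← hset, Finset.prod_filter_mul_prod_filter_not]

lemma prod_split_erase {M N : ℕ} (g : Fin M → β) (j : Fin M) (hj : (j : ℕ) < N) :
    ∏ k ∈ Finset.univ.erase j, g k
      = (∏ k ∈ (Finset.univ.filter (fun k : Fin M => (k : ℕ) < N)).erase j, g k) *
        ∏ k ∈ Finset.univ.filter (fun k : Fin M => N ≤ (k : ℕ)), g k := by
  have hset1 : (Finset.univ.erase j).filter (fun k : Fin M => (k : ℕ) < N)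
      = (Finset.univ.filter (fun k : Fin M => (k : ℕ) < N)).erase j := by
    ext k
    simp only [Finset.mem_filter, Finset.mem_erase, Finset.mem_univ, true_and, and_true]
    try tauto
  have hset2 : (Finset.univ.erase j).filter (fun k : Fin M => ¬ (k : ℕ) < N)
      = Finset.univ.filter (fun k : Fin M => N ≤ (k : ℕ)) := by
    ext k
    simp only [Finset.mem_filter, Finset.mem_erase, Finset.mem_univ, true_and, and_true, not_lt]
    constructor
    · rintro ⟨_, h2⟩; exact h2
    · intro h2
      refine ⟨fun hc => ?_, h2⟩
      subst hc
      omega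
  rw [← hset1, ← hset2, Finset.prod_filter_mul_prod_filter_not]

lemma sq_prod_Ioi {ν : ℕ} (g : Fin ν → ℝ) :
    (∏ i : Fin ν, ∏ j ∈ Finset.Ioi i, (g j - g i)) ^ 2
      = ∏ i : Fin ν, ∏ k ∈ Finset.univ.erase i, |g i - g k| := by
  rw [prod_erase_split Finset.univ (fun i k => |g i - g k|)]
  rw [← Finset.prod_mul_distrib]
  rw [pow_two, ← Finset.prod_mul_distrib]
  refine Finset.prod_congr rfl fun i _ => ?_
  rw [← Finset.prod_mul_distrib, ← Finset.prod_mul_distrib]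
  rw [← filter_lt_eq_Ioi]
  refine Finset.prod_congr rfl fun j _ => ?_
  rw [abs_sub_comm (g i) (g j), ← abs_mul, ← sq, abs_of_nonneg (sq_nonneg _), sq]

end helpers
lemma sq_prod_Ioi' {ν : ℕ} (g : Fin ν → ℝ) :
    (∏ i : Fin ν, ∏ j ∈ Finset.Ioi i, (g i - g j)) ^ 2
      = ∏ i : Fin ν, ∏ k ∈ Finset.univ.erase i, |g i - g k| := by
  rw [prod_erase_split Finset.univ (fun i k => |g i - g k|)]
  rw [← Finset.prod_mul_distrib]
  rw [pow_two, ← Finset.prod_mul_distrib]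
  refine Finset.prod_congr rfl fun i _ => ?_
  rw [← Finset.prod_mul_distrib, ← Finset.prod_mul_distrib]
  rw [← filter_lt_eq_Ioi]
  refine Finset.prod_congr rfl fun j _ => ?_
  rw [abs_sub_comm (g j) (g i), ← abs_mul, ← sq, abs_of_nonneg (sq_nonneg _), sq]

theorem overlap_det_product_formula
    (M : ℕ) (hM : 1 ≤ M)
    (A : Matrix (Fin M) (Fin M) ℂ) (hA : A.IsHermitian)
    (v : Fin M → ℂ)
    (hcyc : Submodule.span ℂ (Set.range fun k : Fin M => (A ^ (k : ℕ)) *ᵥ v) = ⊤)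
    (B : Matrix (Fin M) (Fin M) ℂ) (hB : B = A + Matrix.vecMulVec v (star v))
    (a b : Fin M → ℝ) (hamono : Monotone a) (hbmono : Monotone b)
    (φ ψ : Fin M → Fin M → ℂ)
    (hφortho : ∀ j k, star (φ j) ⬝ᵥ φ k = (if j = k then (1 : ℂ) else 0))
    (hψortho : ∀ j k, star (ψ j) ⬝ᵥ ψ k = (if j = k then (1 : ℂ) else 0))
    (hφeig : ∀ j, A *ᵥ φ j = (a j : ℂ) • φ j)
    (hψeig : ∀ k, B *ᵥ ψ k = (b k : ℂ) • ψ k)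
    (N : ℕ) (hNM : N ≤ M)
    (l m : Fin M → Fin M)
    (hlbij : Function.Bijective l) (hmbij : Function.Bijective m)
    (hlmono : ∀ j k : Fin M, (j : ℕ) < N → (k : ℕ) < N → j < k → l j < l k)
    (hmmono : ∀ j k : Fin M, (j : ℕ) < N → (k : ℕ) < N → j < k → m j < m k) :
    ‖Matrix.det (Matrix.of fun j k : Fin N =>
        star (φ (l (Fin.castLE hNM j))) ⬝ᵥ ψ (m (Fin.castLE hNM k)))‖ ^ 2 =
      ∏ j ∈ Finset.univ.filter (fun j : Fin M => (j : ℕ) < N),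
        ∏ k ∈ Finset.univ.filter (fun k : Fin M => N ≤ (k : ℕ)),
          (|b (m k) - a (l j)| * |a (l k) - b (m j)|) /
            (|a (l k) - a (l j)| * |b (m k) - b (m j)|) := by
  classical
  have hBH : B.IsHermitian := by
    rw [hB]; exact Matrix.IsHermitian.add hA (vecMulVec_star_isHermitian v)
  have hcycA : Submodule.span ℂ (Set.range fun k : ℕ => (A ^ k) *ᵥ v) = ⊤ :=
    span_nat_of_span_fin A v hcyc
  have hcycB : Submodule.span ℂ (Set.range fun k : ℕ => (B ^ k) *ᵥ v) = ⊤ := by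
    rw [hB]; exact span_rank_one A v hcycA
  have hφne : ∀ j, φ j ≠ 0 := by
    intro j hj; have h := hφortho j j; rw [hj] at h; simp at h
  have hψne : ∀ k, ψ k ≠ 0 := by
    intro k hk; have h := hψortho k k; rw [hk] at h; simp at h
  have hcne : ∀ j, star (φ j) ⬝ᵥ v ≠ 0 := fun j =>
    cyclic_overlap_ne_zero hA hcycA (hφeig j) (hφne j)
  have hdne : ∀ k, star (ψ k) ⬝ᵥ v ≠ 0 := fun k =>
    cyclic_overlap_ne_zero hBH hcycB (hψeig k) (hψne k)
  have hainj : Function.Injective a := cyclic_eig_inj hA hcycA φ a hφortho hφeig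
  have hbinj : Function.Injective b := cyclic_eig_inj hBH hcycB ψ b hψortho hψeig
  -- conjugation identities
  have hdv : ∀ k, star v ⬝ᵥ ψ k = (starRingEnd ℂ) (star (ψ k) ⬝ᵥ v) := by
    intro k; rw [Matrix.star_dotProduct]; simp [Complex.star_def]
  have hcv : ∀ j, star v ⬝ᵥ φ j = (starRingEnd ℂ) (star (φ j) ⬝ᵥ v) := by
    intro j; rw [Matrix.star_dotProduct]; simp [Complex.star_def]
  have hswap : ∀ k j, star (ψ k) ⬝ᵥ φ j = (starRingEnd ℂ) (star (φ j) ⬝ᵥ ψ k) := by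
    intro k j; rw [Matrix.star_dotProduct]; simp [Complex.star_def]
  -- the fundamental relation
  have hrowA : ∀ j, Matrix.vecMul (star (φ j)) A = ((a j : ℂ)) • star (φ j) := by
    intro j
    have h := Matrix.star_mulVec (M := A) (v := φ j)
    rw [hφeig j, hA.eq] at h
    rw [← h]; ext i; simp [Complex.star_def]
  have hrel : ∀ j k, (((b k : ℂ)) - ((a j : ℂ))) * (star (φ j) ⬝ᵥ ψ k)
      = (star (φ j) ⬝ᵥ v) * (star v ⬝ᵥ ψ k) := by
    intro j k
    have h1 : star (φ j) ⬝ᵥ (B *ᵥ ψ k) = (b k : ℂ) * (star (φ j) ⬝ᵥ ψ k) := by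
      rw [hψeig k, dotProduct_smul]; simp
    have h2 : star (φ j) ⬝ᵥ (B *ᵥ ψ k)
        = (a j : ℂ) * (star (φ j) ⬝ᵥ ψ k) + (star (φ j) ⬝ᵥ v) * (star v ⬝ᵥ ψ k) := by
      rw [hB, Matrix.add_mulVec, dotProduct_add, vecMulVec_mulVec',
        Matrix.dotProduct_mulVec, hrowA j, smul_dotProduct, dotProduct_smul]
      simp only [smul_eq_mul]
      ring
    linear_combination h2 - h1
  have hab : ∀ j k, a j ≠ b k := by
    intro j k he
    have h := hrel j k
    have hz : ((b k : ℂ)) - ((a j : ℂ)) = 0 := by rw [he]; ring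
    rw [hz, zero_mul] at h
    rcases mul_eq_zero.mp h.symm with h' | h'
    · exact hcne j h'
    · rw [hdv k] at h'
      exact hdne k (by simpa using h')
  have habC : ∀ j k, ((b k : ℂ)) - ((a j : ℂ)) ≠ 0 := by
    intro j k hc
    apply hab j k
    have := sub_eq_zero.mp hc
    exact_mod_cast this.symm
  -- expansion in an orthonormal basis
  have hdotexp : ∀ (χ : Fin M → Fin M → ℂ),
      (∀ j k, star (χ j) ⬝ᵥ χ k = if j = k then (1:ℂ) else 0) →
      ∀ (x u : Fin M → ℂ), u ⬝ᵥ x = ∑ j, (star (χ j) ⬝ᵥ x) * (u ⬝ᵥ χ j) := by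
    intro χ hχ x u
    calc u ⬝ᵥ x = ∑ i, u i * x i := rfl
      _ = ∑ i, u i * ∑ j, (star (χ j) ⬝ᵥ x) * χ j i :=
          Finset.sum_congr rfl fun i _ => by rw [← orth_complete χ hχ x i]
      _ = ∑ j, (star (χ j) ⬝ᵥ x) * (u ⬝ᵥ χ j) := by
          simp only [Finset.mul_sum]
          rw [Finset.sum_comm]
          refine Finset.sum_congr rfl fun j _ => ?_
          simp only [dotProduct, Finset.mul_sum]
          refine Finset.sum_congr rfl fun i _ => by ring
  -- sum rule 1
  have hsum1 : ∀ i, ∑ j, Complex.normSq (star (φ j) ⬝ᵥ v) / (b i - a j) = 1 := by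
    intro i
    have hexp := hdotexp φ hφortho (ψ i) (star v)
    have hterm : ∀ j, (star (φ j) ⬝ᵥ ψ i) * (star v ⬝ᵥ φ j)
        = ((Complex.normSq (star (φ j) ⬝ᵥ v) : ℂ) / (((b i : ℂ)) - ((a j : ℂ))))
            * (star v ⬝ᵥ ψ i) := by
      intro j
      have h := hrel j i
      rw [hcv j, div_mul_eq_mul_div, eq_div_iff (habC j i), ← Complex.mul_conj]
      linear_combination (starRingEnd ℂ) (star (φ j) ⬝ᵥ v) * h
    rw [Finset.sum_congr rfl (fun j _ => hterm j), ← Finset.sum_mul] at hexp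
    have hdne' : star v ⬝ᵥ ψ i ≠ 0 := by
      rw [hdv i]; simpa using hdne i
    have hS : (∑ j, ((Complex.normSq (star (φ j) ⬝ᵥ v) : ℂ)
        / (((b i : ℂ)) - ((a j : ℂ))))) = 1 :=
      mul_right_cancel₀ hdne' (by rw [one_mul, ← hexp])
    have hcast : ((∑ j, Complex.normSq (star (φ j) ⬝ᵥ v) / (b i - a j) : ℝ) : ℂ) = 1 := by
      push_cast
      exact hS
    exact_mod_cast hcast
  -- sum rule 2
  have hsum2 : ∀ j, ∑ k, Complex.normSq (star (ψ k) ⬝ᵥ v) / (b k - a j) = 1 := by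
    intro j
    have hexp := hdotexp ψ hψortho (φ j) (star v)
    have hterm : ∀ k, (star (ψ k) ⬝ᵥ φ j) * (star v ⬝ᵥ ψ k)
        = ((Complex.normSq (star (ψ k) ⬝ᵥ v) : ℂ) / (((b k : ℂ)) - ((a j : ℂ))))
            * (star v ⬝ᵥ φ j) := by
      intro k
      have h := hrel j k
      rw [hdv k] at h
      have hconj := congrArg (starRingEnd ℂ) h
      simp only [_root_.map_mul, map_sub, Complex.conj_conj, Complex.conj_ofReal] at hconj
      rw [hswap k j, hcv j, hdv k, div_mul_eq_mul_div, eq_div_iff (habC j k),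
        ← Complex.mul_conj]
      linear_combination ((starRingEnd ℂ) (star (ψ k) ⬝ᵥ v)) * hconj
    rw [Finset.sum_congr rfl (fun k _ => hterm k), ← Finset.sum_mul] at hexp
    have hcne' : star v ⬝ᵥ φ j ≠ 0 := by
      rw [hcv j]; simpa using hcne j
    have hS : (∑ k, ((Complex.normSq (star (ψ k) ⬝ᵥ v) : ℂ)
        / (((b k : ℂ)) - ((a j : ℂ))))) = 1 :=
      mul_right_cancel₀ hcne' (by rw [one_mul, ← hexp])
    have hcast : ((∑ k, Complex.normSq (star (ψ k) ⬝ᵥ v) / (b k - a j) : ℝ) : ℂ) = 1 := by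
      push_cast
      exact hS
    exact_mod_cast hcast
  -- residue formulas, in absolute-value form
  have hgamma : ∀ i, Complex.normSq (star (φ i) ⬝ᵥ v)
      = (∏ k, |a i - b k|) / ∏ k ∈ Finset.univ.erase i, |a i - a k| := by
    intro i
    have h := residue_formula a b (fun j => Complex.normSq (star (φ j) ⬝ᵥ v)) 1 hbinj
      (fun i j => sub_ne_zero.2 (Ne.symm (hab j i))) hsum1 i
    have hprodne : (∏ k ∈ Finset.univ.erase i, (a i - a k)) ≠ 0 :=
      Finset.prod_ne_zero_iff.2 fun k hk =>
        sub_ne_zero.2 fun hc => (Finset.mem_erase.1 hk).1 (hainj hc).symm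
    have h2 : Complex.normSq (star (φ i) ⬝ᵥ v)
        = (-1 * ∏ k, (a i - b k)) / ∏ k ∈ Finset.univ.erase i, (a i - a k) :=
      (eq_div_iff hprodne).2 h
    calc Complex.normSq (star (φ i) ⬝ᵥ v)
        = |Complex.normSq (star (φ i) ⬝ᵥ v)| := (abs_of_nonneg (Complex.normSq_nonneg _)).symm
      _ = _ := by
          rw [h2, abs_div, abs_mul, abs_neg, abs_one, one_mul, Finset.abs_prod,
            Finset.abs_prod]
  have hdelta : ∀ i, Complex.normSq (star (ψ i) ⬝ᵥ v)
      = (∏ k, |b i - a k|) / ∏ k ∈ Finset.univ.erase i, |b i - b k| := by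
    intro i
    have hsum2' : ∀ i, ∑ k, Complex.normSq (star (ψ k) ⬝ᵥ v) / (a i - b k) = -1 := by
      intro i
      have : ∀ k, Complex.normSq (star (ψ k) ⬝ᵥ v) / (a i - b k)
          = -(Complex.normSq (star (ψ k) ⬝ᵥ v) / (b k - a i)) := by
        intro k
        rw [show a i - b k = -(b k - a i) by ring, div_neg]
      rw [Finset.sum_congr rfl (fun k _ => this k), Finset.sum_neg_distrib, hsum2 i]
    have h := residue_formula b a (fun k => Complex.normSq (star (ψ k) ⬝ᵥ v)) (-1) hainj
      (fun i j => sub_ne_zero.2 (hab i j)) hsum2' i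
    have hprodne : (∏ k ∈ Finset.univ.erase i, (b i - b k)) ≠ 0 :=
      Finset.prod_ne_zero_iff.2 fun k hk =>
        sub_ne_zero.2 fun hc => (Finset.mem_erase.1 hk).1 (hbinj hc).symm
    have h2 : Complex.normSq (star (ψ i) ⬝ᵥ v)
        = (-(-1) * ∏ k, (b i - a k)) / ∏ k ∈ Finset.univ.erase i, (b i - b k) :=
      (eq_div_iff hprodne).2 h
    calc Complex.normSq (star (ψ i) ⬝ᵥ v)
        = |Complex.normSq (star (ψ i) ⬝ᵥ v)| := (abs_of_nonneg (Complex.normSq_nonneg _)).symm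
      _ = _ := by
          rw [h2, abs_div, abs_mul, neg_neg, abs_one, one_mul, Finset.abs_prod,
            Finset.abs_prod]
  -- entry formula for the overlap matrix
  have hentry : ∀ j k : Fin N,
      star (φ (l (Fin.castLE hNM j))) ⬝ᵥ ψ (m (Fin.castLE hNM k))
        = (-(star (φ (l (Fin.castLE hNM j))) ⬝ᵥ v))
            * ((starRingEnd ℂ) (star (ψ (m (Fin.castLE hNM k))) ⬝ᵥ v)
              * (((a (l (Fin.castLE hNM j)) : ℂ))
                  - ((b (m (Fin.castLE hNM k)) : ℂ)))⁻¹) := by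
    intro j k
    have h := hrel (l (Fin.castLE hNM j)) (m (Fin.castLE hNM k))
    rw [hdv] at h
    have hne : ((b (m (Fin.castLE hNM k)) : ℂ)) - ((a (l (Fin.castLE hNM j)) : ℂ)) ≠ 0 :=
      habC _ _
    have hne' : ((a (l (Fin.castLE hNM j)) : ℂ)) - ((b (m (Fin.castLE hNM k)) : ℂ)) ≠ 0 := by
      intro hc; apply hne; linear_combination -hc
    field_simp
    linear_combination -h
  -- factor the determinant
  have hdetfact : Matrix.det (Matrix.of fun j k : Fin N =>
        star (φ (l (Fin.castLE hNM j))) ⬝ᵥ ψ (m (Fin.castLE hNM k)))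
      = (∏ j : Fin N, -(star (φ (l (Fin.castLE hNM j))) ⬝ᵥ v))
        * ((∏ k : Fin N, (starRingEnd ℂ) (star (ψ (m (Fin.castLE hNM k))) ⬝ᵥ v))
          * Matrix.det (Matrix.of fun j k : Fin N =>
              (((a (l (Fin.castLE hNM j)) : ℂ)) - ((b (m (Fin.castLE hNM k)) : ℂ)))⁻¹)) := by
    have e0 : (Matrix.of fun j k : Fin N =>
        star (φ (l (Fin.castLE hNM j))) ⬝ᵥ ψ (m (Fin.castLE hNM k)))
      = Matrix.of fun j k : Fin N =>
          (fun j : Fin N => -(star (φ (l (Fin.castLE hNM j))) ⬝ᵥ v)) j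
            * ((Matrix.of fun j k : Fin N =>
                (starRingEnd ℂ) (star (ψ (m (Fin.castLE hNM k))) ⬝ᵥ v)
                  * (((a (l (Fin.castLE hNM j)) : ℂ))
                      - ((b (m (Fin.castLE hNM k)) : ℂ)))⁻¹) j k) := by
      ext j k
      simp only [Matrix.of_apply]
      exact hentry j k
    rw [e0, Matrix.det_mul_column]
    congr 1
    have e1 : (Matrix.of fun j k : Fin N =>
        (starRingEnd ℂ) (star (ψ (m (Fin.castLE hNM k))) ⬝ᵥ v)
          * (((a (l (Fin.castLE hNM j)) : ℂ)) - ((b (m (Fin.castLE hNM k)) : ℂ)))⁻¹)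
      = Matrix.of fun j k : Fin N =>
          (fun k : Fin N => (starRingEnd ℂ) (star (ψ (m (Fin.castLE hNM k))) ⬝ᵥ v)) k
            * ((Matrix.of fun j k : Fin N =>
                (((a (l (Fin.castLE hNM j)) : ℂ))
                  - ((b (m (Fin.castLE hNM k)) : ℂ)))⁻¹) j k) := rfl
    rw [e1, Matrix.det_mul_row]
  -- Cauchy determinant evaluation
  have hxyne : ∀ j k : Fin N,
      ((a (l (Fin.castLE hNM j)) : ℂ)) - ((b (m (Fin.castLE hNM k)) : ℂ)) ≠ 0 := by
    intro j k hc
    exact habC (l (Fin.castLE hNM j)) (m (Fin.castLE hNM k)) (by linear_combination -hc)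
  have hyinjC : Function.Injective (fun k : Fin N => ((b (m (Fin.castLE hNM k)) : ℂ))) := by
    intro k k' hk
    have hbb : b (m (Fin.castLE hNM k)) = b (m (Fin.castLE hNM k')) := by
      have hk2 : ((b (m (Fin.castLE hNM k)) : ℂ)) = ((b (m (Fin.castLE hNM k')) : ℂ)) := hk
      exact_mod_cast hk2
    exact Fin.castLE_injective hNM (hmbij.1 (hbinj hbb))
  have hcauchy := cauchy_det (F := ℂ) (fun j : Fin N => ((a (l (Fin.castLE hNM j)) : ℂ)))
      (fun k : Fin N => ((b (m (Fin.castLE hNM k)) : ℂ))) hxyne hyinjC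
  set rnum : ℝ := ∏ i : Fin N, ∏ j ∈ Finset.Ioi i,
      ((a (l (Fin.castLE hNM j)) - a (l (Fin.castLE hNM i)))
        * (b (m (Fin.castLE hNM i)) - b (m (Fin.castLE hNM j)))) with hrnumdef
  set rden : ℝ := ∏ i : Fin N, ∏ j : Fin N,
      (a (l (Fin.castLE hNM i)) - b (m (Fin.castLE hNM j))) with hrdendef
  have hdetC : Matrix.det (Matrix.of fun j k : Fin N =>
      (((a (l (Fin.castLE hNM j)) : ℂ)) - ((b (m (Fin.castLE hNM k)) : ℂ)))⁻¹)
      = ((rnum / rden : ℝ) : ℂ) := by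
    rw [hcauchy, hrnumdef, hrdendef]
    push_cast
    rfl
  rw [hdetfact, hdetC]
  rw [norm_mul, norm_mul, mul_pow, mul_pow,
    Complex.sq_norm, Complex.sq_norm, Complex.sq_norm,
    map_prod Complex.normSq, map_prod Complex.normSq, Complex.normSq_ofReal]
  simp only [Complex.normSq_neg, Complex.normSq_conj]
  -- transfer the `Fin N` products to products over `P`
  rw [prod_castLE hNM (fun j => Complex.normSq (star (φ (l j)) ⬝ᵥ v)),
    prod_castLE hNM (fun j => Complex.normSq (star (ψ (m j)) ⬝ᵥ v))]
  -- names for the eight product atoms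
  have ec : ∏ j ∈ Finset.univ.filter (fun j : Fin M => (j : ℕ) < N),
      Complex.normSq (star (φ (l j)) ⬝ᵥ v)
    = ((∏ j ∈ Finset.univ.filter (fun j : Fin M => (j : ℕ) < N),
          ∏ k ∈ Finset.univ.filter (fun j : Fin M => (j : ℕ) < N), |a (l j) - b (m k)|)
        * ∏ j ∈ Finset.univ.filter (fun j : Fin M => (j : ℕ) < N),
            ∏ k ∈ Finset.univ.filter (fun k : Fin M => N ≤ (k : ℕ)), |a (l j) - b (m k)|)
      / ((∏ j ∈ Finset.univ.filter (fun j : Fin M => (j : ℕ) < N),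
            ∏ k ∈ (Finset.univ.filter (fun j : Fin M => (j : ℕ) < N)).erase j,
              |a (l j) - a (l k)|)
          * ∏ j ∈ Finset.univ.filter (fun j : Fin M => (j : ℕ) < N),
              ∏ k ∈ Finset.univ.filter (fun k : Fin M => N ≤ (k : ℕ)),
                |a (l j) - a (l k)|) := by
    have step : ∀ j ∈ Finset.univ.filter (fun j : Fin M => (j : ℕ) < N),
        Complex.normSq (star (φ (l j)) ⬝ᵥ v)
          = ((∏ k ∈ Finset.univ.filter (fun j : Fin M => (j : ℕ) < N), |a (l j) - b (m k)|)
              * ∏ k ∈ Finset.univ.filter (fun k : Fin M => N ≤ (k : ℕ)), |a (l j) - b (m k)|)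
            / ((∏ k ∈ (Finset.univ.filter (fun j : Fin M => (j : ℕ) < N)).erase j,
                  |a (l j) - a (l k)|)
                * ∏ k ∈ Finset.univ.filter (fun k : Fin M => N ≤ (k : ℕ)),
                    |a (l j) - a (l k)|) := by
      intro j hj
      have hjP : (j : ℕ) < N := (Finset.mem_filter.1 hj).2
      rw [hgamma (l j)]
      congr 1
      · rw [← Fintype.prod_bijective m hmbij
          (fun k => |a (l j) - b (m k)|) (fun k => |a (l j) - b k|) (fun k => rfl)]
        exact prod_split_univ _
      · rw [prod_erase_reindex l hlbij _ j]
        exact prod_split_erase _ j hjP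
    rw [Finset.prod_congr rfl step, Finset.prod_div_distrib, Finset.prod_mul_distrib,
      Finset.prod_mul_distrib]
  have ed : ∏ j ∈ Finset.univ.filter (fun j : Fin M => (j : ℕ) < N),
      Complex.normSq (star (ψ (m j)) ⬝ᵥ v)
    = ((∏ j ∈ Finset.univ.filter (fun j : Fin M => (j : ℕ) < N),
          ∏ k ∈ Finset.univ.filter (fun j : Fin M => (j : ℕ) < N), |b (m j) - a (l k)|)
        * ∏ j ∈ Finset.univ.filter (fun j : Fin M => (j : ℕ) < N),
            ∏ k ∈ Finset.univ.filter (fun k : Fin M => N ≤ (k : ℕ)), |b (m j) - a (l k)|)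
      / ((∏ j ∈ Finset.univ.filter (fun j : Fin M => (j : ℕ) < N),
            ∏ k ∈ (Finset.univ.filter (fun j : Fin M => (j : ℕ) < N)).erase j,
              |b (m j) - b (m k)|)
          * ∏ j ∈ Finset.univ.filter (fun j : Fin M => (j : ℕ) < N),
              ∏ k ∈ Finset.univ.filter (fun k : Fin M => N ≤ (k : ℕ)),
                |b (m j) - b (m k)|) := by
    have step : ∀ j ∈ Finset.univ.filter (fun j : Fin M => (j : ℕ) < N),
        Complex.normSq (star (ψ (m j)) ⬝ᵥ v)
          = ((∏ k ∈ Finset.univ.filter (fun j : Fin M => (j : ℕ) < N), |b (m j) - a (l k)|)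
              * ∏ k ∈ Finset.univ.filter (fun k : Fin M => N ≤ (k : ℕ)), |b (m j) - a (l k)|)
            / ((∏ k ∈ (Finset.univ.filter (fun j : Fin M => (j : ℕ) < N)).erase j,
                  |b (m j) - b (m k)|)
                * ∏ k ∈ Finset.univ.filter (fun k : Fin M => N ≤ (k : ℕ)),
                    |b (m j) - b (m k)|) := by
      intro j hj
      have hjP : (j : ℕ) < N := (Finset.mem_filter.1 hj).2
      rw [hdelta (m j)]
      congr 1
      · rw [← Fintype.prod_bijective l hlbij
          (fun k => |b (m j) - a (l k)|) (fun k => |b (m j) - a k|) (fun k => rfl)]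
        exact prod_split_univ _
      · rw [prod_erase_reindex m hmbij _ j]
        exact prod_split_erase _ j hjP
    rw [Finset.prod_congr rfl step, Finset.prod_div_distrib, Finset.prod_mul_distrib,
      Finset.prod_mul_distrib]
  -- rnum and rden squared
  have hrnum2 : rnum * rnum
      = (∏ j ∈ Finset.univ.filter (fun j : Fin M => (j : ℕ) < N),
          ∏ k ∈ (Finset.univ.filter (fun j : Fin M => (j : ℕ) < N)).erase j,
            |a (l j) - a (l k)|)
        * ∏ j ∈ Finset.univ.filter (fun j : Fin M => (j : ℕ) < N),
            ∏ k ∈ (Finset.univ.filter (fun j : Fin M => (j : ℕ) < N)).erase j,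
              |b (m j) - b (m k)| := by
    have hsplit : rnum = (∏ i : Fin N, ∏ j ∈ Finset.Ioi i,
        (a (l (Fin.castLE hNM j)) - a (l (Fin.castLE hNM i))))
        * ∏ i : Fin N, ∏ j ∈ Finset.Ioi i,
            (b (m (Fin.castLE hNM i)) - b (m (Fin.castLE hNM j))) := by
      rw [hrnumdef, ← Finset.prod_mul_distrib]
      exact Finset.prod_congr rfl fun i _ => Finset.prod_mul_distrib
    have tA : ∏ i : Fin N, ∏ k ∈ Finset.univ.erase i,
        |a (l (Fin.castLE hNM i)) - a (l (Fin.castLE hNM k))|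
        = ∏ j ∈ Finset.univ.filter (fun j : Fin M => (j : ℕ) < N),
            ∏ k ∈ (Finset.univ.filter (fun j : Fin M => (j : ℕ) < N)).erase j,
              |a (l j) - a (l k)| := by
      rw [← prod_castLE hNM (fun j =>
        ∏ k ∈ (Finset.univ.filter (fun j : Fin M => (j : ℕ) < N)).erase j, |a (l j) - a (l k)|)]
      exact Finset.prod_congr rfl fun i _ =>
        prod_castLE_erase hNM (fun k => |a (l (Fin.castLE hNM i)) - a (l k)|) i
    have tB : ∏ i : Fin N, ∏ k ∈ Finset.univ.erase i,
        |b (m (Fin.castLE hNM i)) - b (m (Fin.castLE hNM k))|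
        = ∏ j ∈ Finset.univ.filter (fun j : Fin M => (j : ℕ) < N),
            ∏ k ∈ (Finset.univ.filter (fun j : Fin M => (j : ℕ) < N)).erase j,
              |b (m j) - b (m k)| := by
      rw [← prod_castLE hNM (fun j =>
        ∏ k ∈ (Finset.univ.filter (fun j : Fin M => (j : ℕ) < N)).erase j, |b (m j) - b (m k)|)]
      exact Finset.prod_congr rfl fun i _ =>
        prod_castLE_erase hNM (fun k => |b (m (Fin.castLE hNM i)) - b (m k)|) i
    calc rnum * rnum
        = ((∏ i : Fin N, ∏ j ∈ Finset.Ioi i,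
            (a (l (Fin.castLE hNM j)) - a (l (Fin.castLE hNM i)))) ^ 2)
          * ((∏ i : Fin N, ∏ j ∈ Finset.Ioi i,
              (b (m (Fin.castLE hNM i)) - b (m (Fin.castLE hNM j)))) ^ 2) := by
          rw [hsplit]; ring
      _ = _ := by
          rw [sq_prod_Ioi (fun i => a (l (Fin.castLE hNM i))),
            sq_prod_Ioi' (fun i => b (m (Fin.castLE hNM i))), tA, tB]
  have hrden2 : rden * rden
      = (∏ j ∈ Finset.univ.filter (fun j : Fin M => (j : ℕ) < N),
          ∏ k ∈ Finset.univ.filter (fun j : Fin M => (j : ℕ) < N), |a (l j) - b (m k)|)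
        * ∏ j ∈ Finset.univ.filter (fun j : Fin M => (j : ℕ) < N),
            ∏ k ∈ Finset.univ.filter (fun j : Fin M => (j : ℕ) < N), |a (l j) - b (m k)| := by
    have habs : |rden| = ∏ j ∈ Finset.univ.filter (fun j : Fin M => (j : ℕ) < N),
        ∏ k ∈ Finset.univ.filter (fun j : Fin M => (j : ℕ) < N), |a (l j) - b (m k)| := by
      rw [hrdendef, Finset.abs_prod]
      rw [Finset.prod_congr rfl (fun i (_ : i ∈ Finset.univ) => Finset.abs_prod _ _)]
      rw [← prod_castLE hNM (fun j =>
        ∏ k ∈ Finset.univ.filter (fun j : Fin M => (j : ℕ) < N), |a (l j) - b (m k)|)]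
      exact Finset.prod_congr rfl fun i _ =>
        prod_castLE hNM (fun k => |a (l (Fin.castLE hNM i)) - b (m k)|)
    rw [← abs_mul_abs_self rden, habs]
  -- symmetric swap
  have hsymm : ∏ j ∈ Finset.univ.filter (fun j : Fin M => (j : ℕ) < N),
      ∏ k ∈ Finset.univ.filter (fun j : Fin M => (j : ℕ) < N), |b (m j) - a (l k)|
      = ∏ j ∈ Finset.univ.filter (fun j : Fin M => (j : ℕ) < N),
          ∏ k ∈ Finset.univ.filter (fun j : Fin M => (j : ℕ) < N), |a (l j) - b (m k)| := by
    rw [Finset.prod_comm]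
    exact Finset.prod_congr rfl fun j _ => Finset.prod_congr rfl fun k _ => abs_sub_comm _ _
  -- RHS
  have hRHS : ∏ j ∈ Finset.univ.filter (fun j : Fin M => (j : ℕ) < N),
      ∏ k ∈ Finset.univ.filter (fun k : Fin M => N ≤ (k : ℕ)),
        (|b (m k) - a (l j)| * |a (l k) - b (m j)|) /
          (|a (l k) - a (l j)| * |b (m k) - b (m j)|)
      = ((∏ j ∈ Finset.univ.filter (fun j : Fin M => (j : ℕ) < N),
            ∏ k ∈ Finset.univ.filter (fun k : Fin M => N ≤ (k : ℕ)), |a (l j) - b (m k)|)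
          * ∏ j ∈ Finset.univ.filter (fun j : Fin M => (j : ℕ) < N),
              ∏ k ∈ Finset.univ.filter (fun k : Fin M => N ≤ (k : ℕ)), |b (m j) - a (l k)|)
        / ((∏ j ∈ Finset.univ.filter (fun j : Fin M => (j : ℕ) < N),
              ∏ k ∈ Finset.univ.filter (fun k : Fin M => N ≤ (k : ℕ)), |a (l j) - a (l k)|)
            * ∏ j ∈ Finset.univ.filter (fun j : Fin M => (j : ℕ) < N),
                ∏ k ∈ Finset.univ.filter (fun k : Fin M => N ≤ (k : ℕ)),
                  |b (m j) - b (m k)|) := by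
    have step1 : ∀ j ∈ Finset.univ.filter (fun j : Fin M => (j : ℕ) < N),
        ∏ k ∈ Finset.univ.filter (fun k : Fin M => N ≤ (k : ℕ)),
          (|b (m k) - a (l j)| * |a (l k) - b (m j)|) /
            (|a (l k) - a (l j)| * |b (m k) - b (m j)|)
        = ((∏ k ∈ Finset.univ.filter (fun k : Fin M => N ≤ (k : ℕ)), |a (l j) - b (m k)|)
            * ∏ k ∈ Finset.univ.filter (fun k : Fin M => N ≤ (k : ℕ)), |b (m j) - a (l k)|)
          / ((∏ k ∈ Finset.univ.filter (fun k : Fin M => N ≤ (k : ℕ)), |a (l j) - a (l k)|)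
              * ∏ k ∈ Finset.univ.filter (fun k : Fin M => N ≤ (k : ℕ)),
                  |b (m j) - b (m k)|) := by
      intro j _
      rw [← Finset.prod_mul_distrib, ← Finset.prod_mul_distrib, ← Finset.prod_div_distrib]
      refine Finset.prod_congr rfl fun k _ => ?_
      rw [abs_sub_comm (b (m k)) (a (l j)), abs_sub_comm (a (l k)) (b (m j)),
        abs_sub_comm (a (l k)) (a (l j)), abs_sub_comm (b (m k)) (b (m j))]
    rw [Finset.prod_congr rfl step1, Finset.prod_div_distrib, Finset.prod_mul_distrib,
      Finset.prod_mul_distrib]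
  -- nonvanishing of the denominators
  have hne1 : (∏ j ∈ Finset.univ.filter (fun j : Fin M => (j : ℕ) < N),
      ∏ k ∈ Finset.univ.filter (fun j : Fin M => (j : ℕ) < N), |a (l j) - b (m k)|) ≠ 0 :=
    Finset.prod_ne_zero_iff.2 fun j _ => Finset.prod_ne_zero_iff.2 fun k _ =>
      abs_ne_zero.2 (sub_ne_zero.2 (hab (l j) (m k)))
  have hne2 : (∏ j ∈ Finset.univ.filter (fun j : Fin M => (j : ℕ) < N),
      ∏ k ∈ (Finset.univ.filter (fun j : Fin M => (j : ℕ) < N)).erase j,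
        |a (l j) - a (l k)|) ≠ 0 :=
    Finset.prod_ne_zero_iff.2 fun j _ => Finset.prod_ne_zero_iff.2 fun k hk =>
      abs_ne_zero.2 (sub_ne_zero.2 fun hc =>
        (Finset.mem_erase.1 hk).1 (hlbij.1 (hainj hc)).symm)
  have hne3 : (∏ j ∈ Finset.univ.filter (fun j : Fin M => (j : ℕ) < N),
      ∏ k ∈ Finset.univ.filter (fun k : Fin M => N ≤ (k : ℕ)),
        |a (l j) - a (l k)|) ≠ 0 :=
    Finset.prod_ne_zero_iff.2 fun j hj => Finset.prod_ne_zero_iff.2 fun k hk =>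
      abs_ne_zero.2 (sub_ne_zero.2 fun hc => by
        have h1 : (j : ℕ) < N := (Finset.mem_filter.1 hj).2
        have h2 : N ≤ (k : ℕ) := (Finset.mem_filter.1 hk).2
        have := congrArg Fin.val (hlbij.1 (hainj hc))
        omega)
  have hne4 : (∏ j ∈ Finset.univ.filter (fun j : Fin M => (j : ℕ) < N),
      ∏ k ∈ (Finset.univ.filter (fun j : Fin M => (j : ℕ) < N)).erase j,
        |b (m j) - b (m k)|) ≠ 0 :=
    Finset.prod_ne_zero_iff.2 fun j _ => Finset.prod_ne_zero_iff.2 fun k hk =>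
      abs_ne_zero.2 (sub_ne_zero.2 fun hc =>
        (Finset.mem_erase.1 hk).1 (hmbij.1 (hbinj hc)).symm)
  have hne5 : (∏ j ∈ Finset.univ.filter (fun j : Fin M => (j : ℕ) < N),
      ∏ k ∈ Finset.univ.filter (fun k : Fin M => N ≤ (k : ℕ)),
        |b (m j) - b (m k)|) ≠ 0 :=
    Finset.prod_ne_zero_iff.2 fun j hj => Finset.prod_ne_zero_iff.2 fun k hk =>
      abs_ne_zero.2 (sub_ne_zero.2 fun hc => by
        have h1 : (j : ℕ) < N := (Finset.mem_filter.1 hj).2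
        have h2 : N ≤ (k : ℕ) := (Finset.mem_filter.1 hk).2
        have := congrArg Fin.val (hmbij.1 (hbinj hc))
        omega)
  -- final algebra
  rw [ec, ed, hRHS, hsymm]
  rw [div_mul_div_comm, hrnum2, hrden2]
  field_simp
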